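/- Let Q : ℝ³ → M₃(ℝ) be a polynomial map (each matrix entry a real polynomial in k_x, k_y, k_z). Then Q(Rk) = R Q(k) Rᵀ for all R ∈ SO(3) and all k ∈ ℝ³ if and only if there exist one-variable real polynomials m, z, f such that Q(k) = m(s(k)) I₃ + z(s(k)) k kᵀ + f(s(k)) [k]_× for all k ∈ ℝ³. -/

import Mathlib

set_option maxHeartbeats 1600000


open Matrix

/-- The squared norm `s(k) = k_x² + k_y² + k_z²`. -/
def sq3 (k : Fin 3 → ℝ) : ℝ := k 0 ^ 2 + k 1 ^ 2 + k 2 ^ 2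

/-- The antisymmetric matrix `[k]_×` of the cross product: `[k]_× w = k × w`. -/
def crossMat (k : Fin 3 → ℝ) : Matrix (Fin 3) (Fin 3) ℝ :=
  !![0, -k 2, k 1; k 2, 0, -k 0; -k 1, k 0, 0]



lemma sum_range_two_mul (M : ℕ) (F : ℕ → ℝ) :
    ∑ i ∈ Finset.range (2*M), F i = ∑ n ∈ Finset.range M, (F (2*n) + F (2*n+1)) := by
  induction M with
  | zero => simp
  | succ n ih =>
      have h2 : 2 * (n+1) = (2*n + 1) + 1 := by omega
      rw [h2, Finset.sum_range_succ, Finset.sum_range_succ, ih, Finset.sum_range_succ]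
      ring

lemma even_poly (a : Polynomial ℝ) (h : ∀ t : ℝ, a.eval (-t) = a.eval t) :
    ∃ g : Polynomial ℝ, ∀ t : ℝ, a.eval t = g.eval (t^2) := by
  set M := a.natDegree + 1 with hM
  refine ⟨∑ n ∈ Finset.range M, Polynomial.C (a.coeff (2*n)) * Polynomial.X ^ n, fun t => ?_⟩
  have hlt : a.natDegree < 2*M := by omega
  have hev : ∀ x : ℝ, a.eval x = ∑ i ∈ Finset.range (2*M), a.coeff i * x ^ i := fun x =>
    Polynomial.eval_eq_sum_range' hlt x
  calc a.eval t = (a.eval t + a.eval (-t)) / 2 := by rw [h]; ring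
    _ = ∑ i ∈ Finset.range (2*M), a.coeff i * (t^i + (-t)^i) / 2 := by
        rw [hev t, hev (-t), ← Finset.sum_add_distrib, ← Finset.sum_div]
        congr 1; exact Finset.sum_congr rfl fun i _ => by ring
    _ = ∑ n ∈ Finset.range M, (a.coeff (2*n) * (t^(2*n) + (-t)^(2*n)) / 2
          + a.coeff (2*n+1) * (t^(2*n+1) + (-t)^(2*n+1)) / 2) :=
        sum_range_two_mul M _
    _ = ∑ n ∈ Finset.range M, a.coeff (2*n) * (t^2)^n := by
        refine Finset.sum_congr rfl fun n _ => ?_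
        have h1 : (-t)^(2*n) = t^(2*n) := by
          rw [neg_pow]; simp [Even.neg_one_pow (even_two_mul n)]
        have h2 : (-t)^(2*n+1) = -(t^(2*n+1)) := by
          rw [pow_succ, pow_succ, h1]; ring
        rw [h1, h2, ← pow_mul]
        ring
    _ = _ := by
        rw [Polynomial.eval_finset_sum]
        exact Finset.sum_congr rfl fun n _ => by simp

lemma odd_poly (c : Polynomial ℝ) (h : ∀ t : ℝ, c.eval (-t) = - c.eval t) :
    ∃ f : Polynomial ℝ, ∀ t : ℝ, c.eval t = t * f.eval (t^2) := by
  have h0 : c.coeff 0 = 0 := by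
    have := h 0; rw [neg_zero] at this
    have : c.eval 0 = 0 := by linarith
    rwa [Polynomial.coeff_zero_eq_eval_zero]
  obtain ⟨e, rfl⟩ := Polynomial.X_dvd_iff.mpr h0
  have he : ∀ t : ℝ, e.eval (-t) = e.eval t := by
    intro t
    rcases eq_or_ne t 0 with rfl | ht
    · simp
    · have := h t
      simp only [Polynomial.eval_mul, Polynomial.eval_X] at this
      have h2 : (-t) * e.eval (-t) = (-t) * e.eval t := by linarith [this]
      exact mul_left_cancel₀ (neg_ne_zero.mpr ht) h2
  obtain ⟨f, hf⟩ := even_poly e he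
  exact ⟨f, fun t => by simp [Polynomial.eval_mul, hf t]⟩

lemma val_at_zero_poly (c : Polynomial ℝ) (h : c.eval 0 = 0) :
    ∃ f : Polynomial ℝ, ∀ t : ℝ, c.eval t = t * f.eval t := by
  have h0 : c.coeff 0 = 0 := by rwa [Polynomial.coeff_zero_eq_eval_zero]
  obtain ⟨e, rfl⟩ := Polynomial.X_dvd_iff.mpr h0
  exact ⟨e, fun t => by simp⟩

lemma eval_univar (g : Fin 3 → Polynomial ℝ) (p : MvPolynomial (Fin 3) ℝ) (t : ℝ) :
    Polynomial.eval t (MvPolynomial.eval₂ Polynomial.C g p)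
      = MvPolynomial.eval (fun i => Polynomial.eval t (g i)) p := by
  induction p using MvPolynomial.induction_on with
  | C a => simp
  | add p q hp hq => simp [hp, hq]
  | mul_X p i hp => simp [hp]
lemma adj_eq (R : Matrix (Fin 3) (Fin 3) ℝ) (hR : Rᵀ * R = 1) (hdet : R.det = 1) :
    Matrix.adjugate R = Rᵀ := by
  calc Matrix.adjugate R = (Rᵀ * R) * Matrix.adjugate R := by rw [hR, one_mul]
    _ = Rᵀ * (R * Matrix.adjugate R) := by rw [Matrix.mul_assoc]
    _ = Rᵀ := by rw [Matrix.mul_adjugate, hdet]; simp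

lemma crossMat_conj (R : Matrix (Fin 3) (Fin 3) ℝ) (hR : Rᵀ * R = 1) (hdet : R.det = 1)
    (v : Fin 3 → ℝ) : R * crossMat v * Rᵀ = crossMat (R.mulVec v) := by
  have hadj := adj_eq R hR hdet
  rw [Matrix.adjugate_fin_three] at hadj
  have hA : ∀ i j, (!![R 1 1 * R 2 2 - R 1 2 * R 2 1,
      -(R 0 1 * R 2 2) + R 0 2 * R 2 1,
      R 0 1 * R 1 2 - R 0 2 * R 1 1;
      -(R 1 0 * R 2 2) + R 1 2 * R 2 0,
      R 0 0 * R 2 2 - R 0 2 * R 2 0,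
      -(R 0 0 * R 1 2) + R 0 2 * R 1 0;
      R 1 0 * R 2 1 - R 1 1 * R 2 0,
      -(R 0 0 * R 2 1) + R 0 1 * R 2 0,
      R 0 0 * R 1 1 - R 0 1 * R 1 0] : Matrix (Fin 3) (Fin 3) ℝ) i j = R j i :=
    fun i j => by rw [hadj]; rfl
  have h00 := hA 0 0; have h01 := hA 0 1; have h02 := hA 0 2
  have h10 := hA 1 0; have h11 := hA 1 1; have h12 := hA 1 2
  have h20 := hA 2 0; have h21 := hA 2 1; have h22 := hA 2 2
  simp only [Matrix.cons_val', Matrix.cons_val_zero, Matrix.cons_val_one, Matrix.head_cons,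
    Matrix.empty_val', Matrix.cons_val_fin_one, Matrix.head_fin_const, Matrix.of_apply,
    Matrix.cons_val_two, Matrix.tail_cons] at h00 h01 h02 h10 h11 h12 h20 h21 h22
  ext i j
  fin_cases i <;> fin_cases j <;>
    simp [crossMat, Matrix.mul_apply, Matrix.mulVec, dotProduct, Fin.sum_univ_three] <;>
    (try ring)
  · linear_combination (-(v 0)) * h02 + (-(v 1)) * h12 + (-(v 2)) * h22
  · linear_combination (v 0) * h01 + (v 1) * h11 + (v 2) * h21
  · linear_combination (v 0) * h02 + (v 1) * h12 + (v 2) * h22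
  · linear_combination (-(v 0)) * h00 + (-(v 1)) * h10 + (-(v 2)) * h20
  · linear_combination (-(v 0)) * h01 + (-(v 1)) * h11 + (-(v 2)) * h21
  · linear_combination (v 0) * h00 + (v 1) * h10 + (v 2) * h20

lemma exists_rot (k : Fin 3 → ℝ) (hk : sq3 k ≠ 0) :
    ∃ R : Matrix (Fin 3) (Fin 3) ℝ, Rᵀ * R = 1 ∧ R.det = 1 ∧
      R.mulVec ![Real.sqrt (sq3 k), 0, 0] = k := by
  have hs0 : 0 ≤ sq3 k := by unfold sq3; positivity
  set t := Real.sqrt (sq3 k) with htdef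
  have ht2 : t^2 = k 0 ^ 2 + k 1 ^ 2 + k 2 ^ 2 := Real.sq_sqrt hs0
  have ht : t ≠ 0 := by
    intro h
    rw [h] at ht2; unfold sq3 at hk; exact hk (by linarith [ht2])
  clear_value t
  rcases eq_or_ne (k 1 ^ 2 + k 2 ^ 2) 0 with hd | hd
  · have hk1 : k 1 = 0 := by nlinarith [sq_nonneg (k 1), sq_nonneg (k 2)]
    have hk2 : k 2 = 0 := by nlinarith [sq_nonneg (k 1), sq_nonneg (k 2)]
    have ht2' : t^2 = k 0 ^ 2 := by rw [ht2, hk1, hk2]; ring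
    refine ⟨!![k 0 / t, 0, 0; 0, k 0 / t, 0; 0, 0, 1], ?_, ?_, ?_⟩
    · ext i j
      fin_cases i <;> fin_cases j <;>
        simp only [Matrix.mul_apply, Matrix.transpose_apply, Fin.sum_univ_three,
          Matrix.cons_val', Matrix.cons_val_zero, Matrix.cons_val_one, Matrix.head_cons,
          Matrix.cons_val_two, Matrix.tail_cons, Matrix.empty_val', Matrix.cons_val_fin_one,
          Matrix.of_apply, Matrix.one_apply] <;>
        norm_num [Fin.ext_iff] <;> field_simp <;> linarith [ht2']
    · rw [Matrix.det_fin_three]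
      simp only [Matrix.cons_val', Matrix.cons_val_zero, Matrix.cons_val_one, Matrix.head_cons,
        Matrix.cons_val_two, Matrix.tail_cons, Matrix.empty_val', Matrix.cons_val_fin_one,
        Matrix.of_apply, Matrix.head_fin_const]
      field_simp
      linarith [ht2']
    · funext i
      fin_cases i <;>
        simp only [Matrix.mulVec, dotProduct, Fin.sum_univ_three,
          Matrix.cons_val', Matrix.cons_val_zero, Matrix.cons_val_one, Matrix.head_cons,
          Matrix.cons_val_two, Matrix.tail_cons, Matrix.empty_val', Matrix.cons_val_fin_one,
          Matrix.of_apply] <;>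
        norm_num [Fin.ext_iff] <;> (try field_simp) <;> simp [hk1, hk2]
  · set d := Real.sqrt (k 1 ^ 2 + k 2 ^ 2) with hddef
    have hd0 : 0 ≤ k 1 ^ 2 + k 2 ^ 2 := by positivity
    have hd2 : d^2 = k 1 ^ 2 + k 2 ^ 2 := Real.sq_sqrt hd0
    have hdne : d ≠ 0 := by
      intro h; rw [h] at hd2; exact hd (by linarith [hd2])
    clear_value d
    refine ⟨!![k 0 / t, 0, d / t;
               k 1 / t, -(k 2) / d, -(k 0 * k 1) / (t * d);
               k 2 / t, k 1 / d, -(k 0 * k 2) / (t * d)], ?_, ?_, ?_⟩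
    · ext i j
      fin_cases i <;> fin_cases j <;>
        simp only [Matrix.mul_apply, Matrix.transpose_apply, Fin.sum_univ_three,
          Matrix.cons_val', Matrix.cons_val_zero, Matrix.cons_val_one, Matrix.head_cons,
          Matrix.cons_val_two, Matrix.tail_cons, Matrix.empty_val', Matrix.cons_val_fin_one,
          Matrix.of_apply, Matrix.one_apply] <;>
        norm_num [Fin.ext_iff] <;> field_simp <;> ring_nf <;>
        (first
          | linear_combination (k 0 * d * t^4) * hd2
          | linear_combination (-(k 0 * d * t^4)) * hd2
          | linear_combination (d^4*t^4 - d^2*t^4*k 0^2) * hd2 - d^4*t^4 * ht2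
          | linear_combination (d^2*t^4*k 0^2 - d^4*t^4) * hd2 + d^4*t^4 * ht2
          | linear_combination (k 0) * hd2
          | nlinarith [ht2, hd2, sq_nonneg t, sq_nonneg d])
    · rw [Matrix.det_fin_three]
      simp only [Matrix.cons_val', Matrix.cons_val_zero, Matrix.cons_val_one, Matrix.head_cons,
        Matrix.cons_val_two, Matrix.tail_cons, Matrix.empty_val', Matrix.cons_val_fin_one,
        Matrix.of_apply, Matrix.head_fin_const]
      field_simp
      ring_nf
      first
        | linear_combination (-(t^6*d^4*k 0^2)) * hd2 - t^6*d^6 * ht2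
        | linear_combination (t^6*d^4*k 0^2) * hd2 + t^6*d^6 * ht2
        | nlinarith [ht2, hd2]
    · funext i
      fin_cases i <;>
        simp only [Matrix.mulVec, dotProduct, Fin.sum_univ_three,
          Matrix.cons_val', Matrix.cons_val_zero, Matrix.cons_val_one, Matrix.head_cons,
          Matrix.cons_val_two, Matrix.tail_cons, Matrix.empty_val', Matrix.cons_val_fin_one,
          Matrix.of_apply] <;>
        norm_num [Fin.ext_iff] <;> (try rfl) <;> field_simp <;> (try rfl)

lemma conj_entry (R M : Matrix (Fin 3) (Fin 3) ℝ) (i j : Fin 3) :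
    (R * M * Rᵀ) i j = ∑ p : Fin 3, ∑ q : Fin 3, R i p * M p q * R j q := by
  simp only [Matrix.mul_apply, Matrix.transpose_apply, Finset.sum_mul]
  rw [Finset.sum_comm]

-- auxiliary: conjugation of the dyadic matrix
lemma dyad_conj (R : Matrix (Fin 3) (Fin 3) ℝ) (k : Fin 3 → ℝ) :
    R * Matrix.of (fun i j => k i * k j) * Rᵀ
      = Matrix.of (fun i j => R.mulVec k i * R.mulVec k j) := by
  ext i j
  simp only [Matrix.mul_apply, Matrix.transpose_apply, Fin.sum_univ_three, Matrix.of_apply,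
    Matrix.mulVec, dotProduct]
  ring

lemma col_orth (R : Matrix (Fin 3) (Fin 3) ℝ) (hR : Rᵀ * R = 1) (p q : Fin 3) :
    R 0 p * R 0 q + R 1 p * R 1 q + R 2 p * R 2 q = (1 : Matrix (Fin 3) (Fin 3) ℝ) p q := by
  have h := Matrix.ext_iff.mpr hR p q
  simpa [Matrix.mul_apply, Matrix.transpose_apply, Fin.sum_univ_three] using h

lemma row_orth (R : Matrix (Fin 3) (Fin 3) ℝ) (hR : R * Rᵀ = 1) (i j : Fin 3) :
    R i 0 * R j 0 + R i 1 * R j 1 + R i 2 * R j 2 = (1 : Matrix (Fin 3) (Fin 3) ℝ) i j := by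
  have h := Matrix.ext_iff.mpr hR i j
  simpa [Matrix.mul_apply, Matrix.transpose_apply, Fin.sum_univ_three] using h

lemma sq3_rot (R : Matrix (Fin 3) (Fin 3) ℝ) (hR : Rᵀ * R = 1) (k : Fin 3 → ℝ) :
    sq3 (R.mulVec k) = sq3 k := by
  have h00 := col_orth R hR 0 0
  have h11 := col_orth R hR 1 1
  have h22 := col_orth R hR 2 2
  have h01 := col_orth R hR 0 1
  have h02 := col_orth R hR 0 2
  have h12 := col_orth R hR 1 2
  simp only [Matrix.one_apply_eq, Matrix.one_apply_ne (by decide : (0:Fin 3) ≠ 1),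
    Matrix.one_apply_ne (by decide : (0:Fin 3) ≠ 2),
    Matrix.one_apply_ne (by decide : (1:Fin 3) ≠ 2)] at h00 h11 h22 h01 h02 h12
  simp only [sq3, Matrix.mulVec, dotProduct, Fin.sum_univ_three]
  linear_combination (k 0 ^ 2) * h00 + (k 1 ^ 2) * h11 + (k 2 ^ 2) * h22
    + (2 * k 0 * k 1) * h01 + (2 * k 0 * k 2) * h02 + (2 * k 1 * k 2) * h12

/-- a polynomial matrix field `Q : ℝ³ → M₃(ℝ)` satisfies
`Q(Rk) = R Q(k) Rᵀ` for all rotations `R` iff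
`Q(k) = m(s) I₃ + z(s) k kᵀ + f(s) [k]_×` with `s = s(k)`. -/
theorem rotation_equivariant_matrix_field_3d (Q : (Fin 3 → ℝ) → Matrix (Fin 3) (Fin 3) ℝ)
    (hQ : ∃ P : Matrix (Fin 3) (Fin 3) (MvPolynomial (Fin 3) ℝ),
      ∀ (k : Fin 3 → ℝ) (i j : Fin 3), Q k i j = MvPolynomial.eval k (P i j)) :
    (∀ R : Matrix (Fin 3) (Fin 3) ℝ, Rᵀ * R = 1 → R.det = 1 →
      ∀ k : Fin 3 → ℝ, Q (R.mulVec k) = R * Q k * Rᵀ)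
    ↔ ∃ m z f : Polynomial ℝ, ∀ (k : Fin 3 → ℝ) (i j : Fin 3),
        Q k i j = Polynomial.eval (sq3 k) m * (1 : Matrix (Fin 3) (Fin 3) ℝ) i j
          + Polynomial.eval (sq3 k) z * (k i * k j)
          + Polynomial.eval (sq3 k) f * crossMat k i j := by
  constructor
  · intro hEq
    obtain ⟨P, hP⟩ := hQ
    have hpol : ∀ i j : Fin 3, ∀ t : ℝ,
        (MvPolynomial.eval₂ Polynomial.C ![Polynomial.X, 0, 0] (P i j)).eval t
          = Q ![t, 0, 0] i j := by
      intro i j t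
      rw [hP, eval_univar]
      have harg : (fun p => Polynomial.eval t (![Polynomial.X, 0, 0] p)) = ![t, 0, 0] := by
        funext p; fin_cases p <;> simp
      rw [harg]
    -- rotation by π about the x-axis : kills first row/column off-diagonal entries
    have hEqx : ∀ t : ℝ, Q ![t,0,0]
        = !![(1:ℝ),0,0;0,-1,0;0,0,-1] * Q ![t,0,0] * (!![(1:ℝ),0,0;0,-1,0;0,0,-1])ᵀ := by
      intro t
      have hfix : (!![(1:ℝ),0,0;0,-1,0;0,0,-1]).mulVec ![t,0,0] = ![t,0,0] := by
        funext i; fin_cases i <;>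
          simp [Matrix.mulVec, dotProduct, Fin.sum_univ_three]
      have h := hEq !![(1:ℝ),0,0;0,-1,0;0,0,-1]
        (by ext i j; fin_cases i <;> fin_cases j <;>
            simp only [Matrix.mul_apply, Matrix.transpose_apply, Fin.sum_univ_three, Matrix.cons_val', Matrix.cons_val_zero, Matrix.cons_val_one, Matrix.head_cons, Matrix.cons_val_two, Matrix.tail_cons, Matrix.empty_val', Matrix.cons_val_fin_one, Matrix.of_apply, Matrix.vecHead, Matrix.vecTail, Matrix.one_apply] <;> norm_num [Fin.ext_iff])
        (by simp [Matrix.det_fin_three]) ![t,0,0]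
      rwa [hfix] at h
    have F01 : ∀ t : ℝ, Q ![t,0,0] 0 1 = 0 := by
      intro t
      have h := Matrix.ext_iff.mpr (hEqx t) 0 1
      rw [conj_entry] at h
      simp only [Fin.sum_univ_three] at h
      norm_num [Matrix.cons_val_zero, Matrix.cons_val_one, Matrix.head_cons,
        Matrix.cons_val_two, Matrix.tail_cons, Matrix.cons_val', Matrix.empty_val',
        Matrix.cons_val_fin_one, Matrix.of_apply, Matrix.vecHead, Matrix.vecTail, Function.comp] at h
      linarith
    have F02 : ∀ t : ℝ, Q ![t,0,0] 0 2 = 0 := by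
      intro t
      have h := Matrix.ext_iff.mpr (hEqx t) 0 2
      rw [conj_entry] at h
      simp only [Fin.sum_univ_three] at h
      norm_num [Matrix.cons_val_zero, Matrix.cons_val_one, Matrix.head_cons,
        Matrix.cons_val_two, Matrix.tail_cons, Matrix.cons_val', Matrix.empty_val',
        Matrix.cons_val_fin_one, Matrix.of_apply, Matrix.vecHead, Matrix.vecTail, Function.comp] at h
      linarith
    have F10 : ∀ t : ℝ, Q ![t,0,0] 1 0 = 0 := by
      intro t
      have h := Matrix.ext_iff.mpr (hEqx t) 1 0
      rw [conj_entry] at h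
      simp only [Fin.sum_univ_three] at h
      norm_num [Matrix.cons_val_zero, Matrix.cons_val_one, Matrix.head_cons,
        Matrix.cons_val_two, Matrix.tail_cons, Matrix.cons_val', Matrix.empty_val',
        Matrix.cons_val_fin_one, Matrix.of_apply, Matrix.vecHead, Matrix.vecTail, Function.comp] at h
      linarith
    have F20 : ∀ t : ℝ, Q ![t,0,0] 2 0 = 0 := by
      intro t
      have h := Matrix.ext_iff.mpr (hEqx t) 2 0
      rw [conj_entry] at h
      simp only [Fin.sum_univ_three] at h
      norm_num [Matrix.cons_val_zero, Matrix.cons_val_one, Matrix.head_cons,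
        Matrix.cons_val_two, Matrix.tail_cons, Matrix.cons_val', Matrix.empty_val',
        Matrix.cons_val_fin_one, Matrix.of_apply, Matrix.vecHead, Matrix.vecTail, Function.comp] at h
      linarith
    -- rotation by π/2 about the x-axis
    have hEqx4 : ∀ t : ℝ, Q ![t,0,0]
        = !![(1:ℝ),0,0;0,0,-1;0,1,0] * Q ![t,0,0] * (!![(1:ℝ),0,0;0,0,-1;0,1,0])ᵀ := by
      intro t
      have hfix : (!![(1:ℝ),0,0;0,0,-1;0,1,0]).mulVec ![t,0,0] = ![t,0,0] := by
        funext i; fin_cases i <;>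
          simp [Matrix.mulVec, dotProduct, Fin.sum_univ_three]
      have h := hEq !![(1:ℝ),0,0;0,0,-1;0,1,0]
        (by ext i j; fin_cases i <;> fin_cases j <;>
            simp only [Matrix.mul_apply, Matrix.transpose_apply, Fin.sum_univ_three, Matrix.cons_val', Matrix.cons_val_zero, Matrix.cons_val_one, Matrix.head_cons, Matrix.cons_val_two, Matrix.tail_cons, Matrix.empty_val', Matrix.cons_val_fin_one, Matrix.of_apply, Matrix.vecHead, Matrix.vecTail, Matrix.one_apply] <;> norm_num [Fin.ext_iff])
        (by simp [Matrix.det_fin_three]) ![t,0,0]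
      rwa [hfix] at h
    have F22 : ∀ t : ℝ, Q ![t,0,0] 2 2 = Q ![t,0,0] 1 1 := by
      intro t
      have h := Matrix.ext_iff.mpr (hEqx4 t) 2 2
      rw [conj_entry] at h
      simp only [Fin.sum_univ_three] at h
      norm_num [Matrix.cons_val_zero, Matrix.cons_val_one, Matrix.head_cons,
        Matrix.cons_val_two, Matrix.tail_cons, Matrix.cons_val', Matrix.empty_val',
        Matrix.cons_val_fin_one, Matrix.of_apply, Matrix.vecHead, Matrix.vecTail, Function.comp] at h
      linarith
    have F12 : ∀ t : ℝ, Q ![t,0,0] 1 2 = -(Q ![t,0,0] 2 1) := by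
      intro t
      have h := Matrix.ext_iff.mpr (hEqx4 t) 2 1
      rw [conj_entry] at h
      simp only [Fin.sum_univ_three] at h
      norm_num [Matrix.cons_val_zero, Matrix.cons_val_one, Matrix.head_cons,
        Matrix.cons_val_two, Matrix.tail_cons, Matrix.cons_val', Matrix.empty_val',
        Matrix.cons_val_fin_one, Matrix.of_apply, Matrix.vecHead, Matrix.vecTail, Function.comp] at h
      linarith
    -- rotation by π about the z-axis : parity in t
    have hEqz : ∀ t : ℝ, Q ![-t,0,0]
        = !![(-1:ℝ),0,0;0,-1,0;0,0,1] * Q ![t,0,0] * (!![(-1:ℝ),0,0;0,-1,0;0,0,1])ᵀ := by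
      intro t
      have hfix : (!![(-1:ℝ),0,0;0,-1,0;0,0,1]).mulVec ![t,0,0] = ![-t,0,0] := by
        funext i; fin_cases i <;>
          simp [Matrix.mulVec, dotProduct, Fin.sum_univ_three]
      have h := hEq !![(-1:ℝ),0,0;0,-1,0;0,0,1]
        (by ext i j; fin_cases i <;> fin_cases j <;>
            simp only [Matrix.mul_apply, Matrix.transpose_apply, Fin.sum_univ_three, Matrix.cons_val', Matrix.cons_val_zero, Matrix.cons_val_one, Matrix.head_cons, Matrix.cons_val_two, Matrix.tail_cons, Matrix.empty_val', Matrix.cons_val_fin_one, Matrix.of_apply, Matrix.vecHead, Matrix.vecTail, Matrix.one_apply] <;> norm_num [Fin.ext_iff])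
        (by simp [Matrix.det_fin_three]) ![t,0,0]
      rwa [hfix] at h
    have F00n : ∀ t : ℝ, Q ![-t,0,0] 0 0 = Q ![t,0,0] 0 0 := by
      intro t
      have h := Matrix.ext_iff.mpr (hEqz t) 0 0
      rw [conj_entry] at h
      simp only [Fin.sum_univ_three] at h
      norm_num [Matrix.cons_val_zero, Matrix.cons_val_one, Matrix.head_cons,
        Matrix.cons_val_two, Matrix.tail_cons, Matrix.cons_val', Matrix.empty_val',
        Matrix.cons_val_fin_one, Matrix.of_apply, Matrix.vecHead, Matrix.vecTail, Function.comp] at h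
      linarith
    have F11n : ∀ t : ℝ, Q ![-t,0,0] 1 1 = Q ![t,0,0] 1 1 := by
      intro t
      have h := Matrix.ext_iff.mpr (hEqz t) 1 1
      rw [conj_entry] at h
      simp only [Fin.sum_univ_three] at h
      norm_num [Matrix.cons_val_zero, Matrix.cons_val_one, Matrix.head_cons,
        Matrix.cons_val_two, Matrix.tail_cons, Matrix.cons_val', Matrix.empty_val',
        Matrix.cons_val_fin_one, Matrix.of_apply, Matrix.vecHead, Matrix.vecTail, Function.comp] at h
      linarith
    have F21n : ∀ t : ℝ, Q ![-t,0,0] 2 1 = -(Q ![t,0,0] 2 1) := by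
      intro t
      have h := Matrix.ext_iff.mpr (hEqz t) 2 1
      rw [conj_entry] at h
      simp only [Fin.sum_univ_three] at h
      norm_num [Matrix.cons_val_zero, Matrix.cons_val_one, Matrix.head_cons,
        Matrix.cons_val_two, Matrix.tail_cons, Matrix.cons_val', Matrix.empty_val',
        Matrix.cons_val_fin_one, Matrix.of_apply, Matrix.vecHead, Matrix.vecTail, Function.comp] at h
      linarith
    -- cyclic rotation at the origin
    have Fcyc : Q ![(0:ℝ),0,0] 1 1 = Q ![(0:ℝ),0,0] 0 0 := by
      have hfix : (!![(0:ℝ),0,1;1,0,0;0,1,0]).mulVec ![(0:ℝ),0,0] = ![(0:ℝ),0,0] := by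
        funext i; fin_cases i <;>
          simp [Matrix.mulVec, dotProduct, Fin.sum_univ_three]
      have h := hEq !![(0:ℝ),0,1;1,0,0;0,1,0]
        (by ext i j; fin_cases i <;> fin_cases j <;>
            simp only [Matrix.mul_apply, Matrix.transpose_apply, Fin.sum_univ_three, Matrix.cons_val', Matrix.cons_val_zero, Matrix.cons_val_one, Matrix.head_cons, Matrix.cons_val_two, Matrix.tail_cons, Matrix.empty_val', Matrix.cons_val_fin_one, Matrix.of_apply, Matrix.vecHead, Matrix.vecTail, Matrix.one_apply] <;> norm_num [Fin.ext_iff])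
        (by simp [Matrix.det_fin_three]) ![(0:ℝ),0,0]
      rw [hfix] at h
      have h' := Matrix.ext_iff.mpr h 1 1
      rw [conj_entry] at h'
      simp only [Fin.sum_univ_three] at h'
      norm_num [Matrix.cons_val_zero, Matrix.cons_val_one, Matrix.head_cons,
        Matrix.cons_val_two, Matrix.tail_cons, Matrix.cons_val', Matrix.empty_val',
        Matrix.cons_val_fin_one, Matrix.of_apply, Matrix.vecHead, Matrix.vecTail, Function.comp] at h'
      linarith
    -- one-variable polynomials
    set a := MvPolynomial.eval₂ Polynomial.C ![Polynomial.X, 0, 0] (P 0 0) with hadef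
    set b := MvPolynomial.eval₂ Polynomial.C ![Polynomial.X, 0, 0] (P 1 1) with hbdef
    set c := MvPolynomial.eval₂ Polynomial.C ![Polynomial.X, 0, 0] (P 2 1) with hcdef
    have hpa : ∀ t : ℝ, a.eval t = Q ![t,0,0] 0 0 := hpol 0 0
    have hpb : ∀ t : ℝ, b.eval t = Q ![t,0,0] 1 1 := hpol 1 1
    have hpc : ∀ t : ℝ, c.eval t = Q ![t,0,0] 2 1 := hpol 2 1
    obtain ⟨m, hm⟩ := even_poly b (fun t => by rw [hpb, hpb]; exact F11n t)
    obtain ⟨h', hh⟩ := even_poly (a - b) (fun t => by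
      simp only [Polynomial.eval_sub]; rw [hpa, hpa, hpb, hpb, F00n t, F11n t])
    have hh0 : h'.eval 0 = 0 := by
      have h1 := hh 0
      have h2 : (a - b).eval 0 = 0 := by
        simp only [Polynomial.eval_sub]; rw [hpa, hpb, Fcyc]; ring
      rw [h2] at h1; norm_num at h1; linarith
    obtain ⟨z, hz⟩ := val_at_zero_poly h' hh0
    obtain ⟨f, hf⟩ := odd_poly c (fun t => by rw [hpc, hpc]; exact F21n t)
    refine ⟨m, z, f, ?_⟩
    intro k i j
    rcases eq_or_ne (sq3 k) 0 with h0 | h0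
    · have hk0 : k 0 = 0 := by
        unfold sq3 at h0; nlinarith [sq_nonneg (k 0), sq_nonneg (k 1), sq_nonneg (k 2)]
      have hk1 : k 1 = 0 := by
        unfold sq3 at h0; nlinarith [sq_nonneg (k 0), sq_nonneg (k 1), sq_nonneg (k 2)]
      have hk2 : k 2 = 0 := by
        unfold sq3 at h0; nlinarith [sq_nonneg (k 0), sq_nonneg (k 1), sq_nonneg (k 2)]
      have hkk : k = ![(0:ℝ),0,0] := by
        funext p; fin_cases p <;> simpa [hk0, hk1, hk2]
      subst hkk
      have hs0 : sq3 ![(0:ℝ),0,0] = 0 := by simp [sq3]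
      rw [hs0]
      have hb0 : Q ![(0:ℝ),0,0] 1 1 = m.eval 0 := by
        rw [← hpb 0]
        have := hm 0; norm_num at this; exact this
      have ha0 : Q ![(0:ℝ),0,0] 0 0 = m.eval 0 := by rw [← Fcyc]; exact hb0
      have hc0 : Q ![(0:ℝ),0,0] 2 1 = 0 := by
        rw [← hpc 0]; rw [hf 0]; ring
      fin_cases i <;> fin_cases j <;>
        simp [crossMat, Matrix.one_apply, Matrix.vecHead, Matrix.vecTail] <;>
        linarith [F01 (0:ℝ), F02 (0:ℝ), F10 (0:ℝ), F20 (0:ℝ), F22 (0:ℝ), F12 (0:ℝ),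
          hb0, ha0, hc0]
    · have hsnn : 0 ≤ sq3 k := by unfold sq3; positivity
      obtain ⟨R, hRo, hRd, hRk⟩ := exists_rot k h0
      set t := Real.sqrt (sq3 k) with htdef
      have ht2 : t^2 = sq3 k := Real.sq_sqrt hsnn
      have hRRt : R * Rᵀ = 1 := mul_eq_one_comm.mpr hRo
      have h := hEq R hRo hRd ![t,0,0]
      rw [hRk] at h
      have hcolk : ∀ p : Fin 3, t * R p 0 = k p := by
        intro p
        have hp := congrFun hRk p
        simp [Matrix.mulVec, dotProduct, Fin.sum_univ_three] at hp
        linarith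
      have e1 : Q k i j = (Q ![t,0,0] 0 0) * (R i 0 * R j 0)
          + (Q ![t,0,0] 1 1) * (R i 1 * R j 1 + R i 2 * R j 2)
          + (Q ![t,0,0] 2 1) * (R i 2 * R j 1 - R i 1 * R j 2) := by
        rw [h]
        simp only [Matrix.mul_apply, Matrix.transpose_apply, Fin.sum_univ_three]
        rw [F01 t, F02 t, F10 t, F20 t, F22 t, F12 t]
        ring
      have hcross : R * crossMat ![t,0,0] * Rᵀ = crossMat k := by
        rw [crossMat_conj R hRo hRd, hRk]
      have e2 : crossMat k i j = t * (R i 2 * R j 1 - R i 1 * R j 2) := by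
        rw [← hcross]
        simp only [Matrix.mul_apply, Matrix.transpose_apply, Fin.sum_univ_three, crossMat]
        simp [Matrix.vecHead, Matrix.vecTail]
        ring
      have hrowij := row_orth R hRRt i j
      have hA : Q ![t,0,0] 0 0 = m.eval (t^2) + t^2 * z.eval (t^2) := by
        rw [← hpa t]
        have h1 : a.eval t = (a - b).eval t + b.eval t := by
          simp only [Polynomial.eval_sub]; ring
        rw [h1, hh t, hm t, hz (t^2)]; ring
      have hB : Q ![t,0,0] 1 1 = m.eval (t^2) := by rw [← hpb t]; exact hm t
      have hC : Q ![t,0,0] 2 1 = t * f.eval (t^2) := by rw [← hpc t]; exact hf t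
      rw [e1, hA, hB, hC, ← ht2, e2, ← hcolk i, ← hcolk j]
      linear_combination (m.eval (t^2)) * hrowij

  · rintro ⟨m, z, f, hF⟩ R hRo hRd k
    have hRRt : R * Rᵀ = 1 := mul_eq_one_comm.mpr hRo
    have hs := sq3_rot R hRo k
    have hQk : ∀ u : Fin 3 → ℝ, Q u = Polynomial.eval (sq3 u) m • (1 : Matrix (Fin 3) (Fin 3) ℝ)
        + Polynomial.eval (sq3 u) z • Matrix.of (fun i j => u i * u j)
        + Polynomial.eval (sq3 u) f • crossMat u := by
      intro u; ext i j
      rw [hF u i j]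
      simp [Matrix.smul_apply, Matrix.of_apply]
    rw [hQk k, hQk (R.mulVec k), hs]
    rw [Matrix.mul_add, Matrix.mul_add, Matrix.add_mul, Matrix.add_mul]
    rw [Matrix.mul_smul, Matrix.mul_smul, Matrix.mul_smul,
      Matrix.smul_mul, Matrix.smul_mul, Matrix.smul_mul]
    rw [Matrix.mul_one, hRRt, dyad_conj, crossMat_conj R hRo hRd]
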